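/- Let Xᵢ be open pairwise disjoint subsets of ℝⁿ with f continuous on each Xᵢ. Let cl_f(Xᵢ) := {x ∈ cl(Xᵢ) : f restricted to Xᵢ ∪ {x} is continuous}, I(x) the minimal i with x ∈ cl_f(Xᵢ), and Yᵢ := {x : I(x) = i}. Then for every i, the chain of inclusions int(Xᵢ) = Xᵢ ⊆ Yᵢ ⊆ cl_f(Xᵢ) ⊆ cl(Xᵢ) holds; in particular int(Yᵢ) ⊇ Xᵢ and Yᵢ ⊆ cl(int(Yᵢ)), so Yᵢ is ample. -/
import Mathlib


/-- With `cl_f(Xᵢ) = {x ∈ cl Xᵢ : f continuous on Xᵢ ∪ {x}}`, `I x` the minimal index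
with `x ∈ cl_f(Xᵢ)` and `Yᵢ = {x : I x = i}`, the chain of inclusions
`int Xᵢ = Xᵢ ⊆ Yᵢ ⊆ cl_f(Xᵢ) ⊆ cl Xᵢ` holds; in particular `Xᵢ ⊆ int Yᵢ` and
`Yᵢ ⊆ cl (int Yᵢ)`, i.e. `Yᵢ` is ample. -/
theorem chain_of_inclusions_Y_ample {n : ℕ}
    (f : EuclideanSpace ℝ (Fin n) → ℝ)
    (Xi : ℕ → Set (EuclideanSpace ℝ (Fin n)))
    (hopen : ∀ i, IsOpen (Xi i))
    (hdisj : Pairwise (Function.onFun Disjoint Xi))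
    (hcont : ∀ i, ContinuousOn f (Xi i))
    (clf : ℕ → Set (EuclideanSpace ℝ (Fin n)))
    (hclf : ∀ i, clf i = {x | x ∈ closure (Xi i) ∧ ContinuousOn f (Xi i ∪ {x})})
    (D : Set (EuclideanSpace ℝ (Fin n))) (hD : D = ⋃ i, closure (Xi i))
    (I : EuclideanSpace ℝ (Fin n) → ℕ)
    (hI : ∀ x ∈ D, x ∈ clf (I x) ∧ ∀ j < I x, x ∉ clf j)
    (Y : ℕ → Set (EuclideanSpace ℝ (Fin n)))
    (hY : ∀ i, Y i = {x | x ∈ D ∧ I x = i}) :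
    ∀ i, interior (Xi i) = Xi i ∧ Xi i ⊆ Y i ∧ Y i ⊆ clf i ∧ clf i ⊆ closure (Xi i) ∧
      Xi i ⊆ interior (Y i) ∧ Y i ⊆ closure (interior (Y i)) := by
  intro i
  have hXY : Xi i ⊆ Y i := by
    intro x hx
    have hxD : x ∈ D := hD ▸ Set.mem_iUnion.mpr ⟨i, subset_closure hx⟩
    have hxclf : x ∈ clf i := by
      rw [hclf]
      refine ⟨subset_closure hx, ?_⟩
      have : Xi i ∪ {x} = Xi i := by
        apply Set.union_eq_self_of_subset_right
        simpa using hx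
      rw [this]; exact hcont i
    obtain ⟨h1, h2⟩ := hI x hxD
    have hIi : I x = i := by
      rcases lt_trichotomy (I x) i with h | h | h
      · -- I x < i : x ∈ clf (I x) ⊆ closure (Xi (I x)), contradiction with disjointness
        exfalso
        have hxc : x ∈ closure (Xi (I x)) := by
          rw [hclf] at h1; exact h1.1
        have hdj : Disjoint (Xi i) (Xi (I x)) := hdisj (Ne.symm h.ne)
        have : x ∈ closure (Xi (I x)) → x ∉ Xi i := by
          intro hc hxi
          have := (hopen i).mem_nhds hxi
          rcases mem_closure_iff_nhds.mp hc (Xi i) this with ⟨y, hy1, hy2⟩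
          exact hdj.ne_of_mem hy1 hy2 rfl
        exact this hxc hx
      · exact h
      · exact absurd hxclf (h2 i h)
    rw [hY]; exact ⟨hxD, hIi⟩
  have hYclf : Y i ⊆ clf i := by
    intro x hx
    rw [hY] at hx
    obtain ⟨hxD, hIx⟩ := hx
    have := (hI x hxD).1
    rwa [hIx] at this
  have hclfcl : clf i ⊆ closure (Xi i) := by
    intro x hx; rw [hclf] at hx; exact hx.1
  have hXint : Xi i ⊆ interior (Y i) := (hopen i).subset_interior_iff.mpr hXY
  refine ⟨(hopen i).interior_eq, hXY, hYclf, hclfcl, hXint, ?_⟩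
  exact (hYclf.trans hclfcl).trans (closure_mono hXint)
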